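/- Let (s_n)_{n≥0} be a real sequence such that the Hankel matrix H_n = (s_{i+j})_{0≤i,j≤n} is positive semi-definite for every n ≥ 0. Then exactly one of the following holds: either D_n > 0 for all n ≥ 0, or there exists an integer n₀ ≥ 0 such that D_n > 0 for all n < n₀ and D_n = 0 for all n ≥ n₀. -/

import Mathlib

private lemma psd_det_nonneg {n : ℕ} {A : Matrix (Fin n) (Fin n) ℝ}
    (h : A.PosSemidef) : 0 ≤ A.det := by
  rw [h.isHermitian.det_eq_prod_eigenvalues]
  exact Finset.prod_nonneg fun i _ => by exact_mod_cast h.eigenvalues_nonneg i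

private lemma hankel_step (s : ℕ → ℝ)
    (hpsd : ∀ n : ℕ, (Matrix.of fun i j : Fin (n + 1) => s (i.1 + j.1)).PosSemidef)
    (n : ℕ) (h : (Matrix.of fun i j : Fin (n + 1) => s (i.1 + j.1)).det = 0) :
    (Matrix.of fun i j : Fin (n + 2) => s (i.1 + j.1)).det = 0 := by
  obtain ⟨v, hv, hv0⟩ := Matrix.exists_mulVec_eq_zero_iff.mpr h
  set x : Fin (n + 2) → ℝ := fun i => if h : (i : ℕ) < n + 1 then v ⟨i, h⟩ else 0 with hx
  have hxcast : ∀ i : Fin (n + 1), x i.castSucc = v i := by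
    intro i
    simp [hx, Fin.castSucc, i.isLt]
    exact fun hlt => absurd i.isLt (by omega)
  have hxlast : x (Fin.last (n + 1)) = 0 := by
    simp [hx]
  have hxne : x ≠ 0 := by
    obtain ⟨j, hj⟩ := Function.ne_iff.mp hv
    intro hx0
    apply hj
    have := congrFun hx0 j.castSucc
    rwa [hxcast] at this
  have hquad : dotProduct (star x)
      ((Matrix.of fun i j : Fin (n + 2) => s (i.1 + j.1)).mulVec x) = 0 := by
    have hmull : ∀ i : Fin (n + 1),
        ((Matrix.of fun i j : Fin (n + 2) => s (i.1 + j.1)).mulVec x) i.castSucc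
          = ((Matrix.of fun i j : Fin (n + 1) => s (i.1 + j.1)).mulVec v) i := by
      intro i
      simp only [Matrix.mulVec, dotProduct, Matrix.of_apply]
      rw [Fin.sum_univ_castSucc, hxlast, mul_zero, add_zero]
      refine Finset.sum_congr rfl fun j _ => ?_
      rw [hxcast]
      simp
    have hstep : dotProduct (star x)
          ((Matrix.of fun i j : Fin (n + 2) => s (i.1 + j.1)).mulVec x)
        = dotProduct v
          ((Matrix.of fun i j : Fin (n + 1) => s (i.1 + j.1)).mulVec v) := by
      simp only [star_trivial, dotProduct]
      rw [Fin.sum_univ_castSucc, hxlast, zero_mul, add_zero]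
      exact Finset.sum_congr rfl fun i _ => by rw [hxcast, hmull]
    rw [hstep, hv0, dotProduct_zero]
  have hker := ((hpsd (n + 1)).dotProduct_mulVec_zero_iff x).mp hquad
  exact Matrix.exists_mulVec_eq_zero_iff.mp ⟨x, hxne, hker⟩

/-- If every Hankel matrix of a real sequence is positive semi-definite, then exactly one
of the following holds: either all Hankel determinants are positive, or there is an `n₀`
such that `D n > 0` for `n < n₀` and `D n = 0` for `n ≥ n₀`. -/
theorem hankel_det_dichotomy (s : ℕ → ℝ)
    (hpsd : ∀ n : ℕ, (Matrix.of fun i j : Fin (n + 1) => s (i.1 + j.1)).PosSemidef) :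
    Xor' (∀ n : ℕ, 0 < (Matrix.of fun i j : Fin (n + 1) => s (i.1 + j.1)).det)
      (∃ n₀ : ℕ, (∀ n < n₀, 0 < (Matrix.of fun i j : Fin (n + 1) => s (i.1 + j.1)).det) ∧
        ∀ n ≥ n₀, (Matrix.of fun i j : Fin (n + 1) => s (i.1 + j.1)).det = 0) := by
  rw [Xor']
  set D : ℕ → ℝ := fun n => (Matrix.of fun i j : Fin (n + 1) => s (i.1 + j.1)).det with hD
  have hnonneg : ∀ n, 0 ≤ D n := fun n => psd_det_nonneg (hpsd n)
  by_cases hall : ∀ n, 0 < D n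
  · refine Or.inl ⟨hall, ?_⟩
    rintro ⟨n₀, -, h2⟩
    exact (hall n₀).ne' (h2 n₀ le_rfl)
  · refine Or.inr ⟨?_, fun h1 => hall h1⟩
    push_neg at hall
    have hex : ∃ n, ¬ 0 < D n := by
      obtain ⟨n, hn⟩ := hall
      exact ⟨n, not_lt.mpr hn⟩
    refine ⟨Nat.find hex, fun n hn => ?_, fun n hn => ?_⟩
    · exact not_not.mp (Nat.find_min hex hn)
    · have hbase : D (Nat.find hex) = 0 :=
        le_antisymm (not_lt.mp (Nat.find_spec hex)) (hnonneg _)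
      induction n, hn using Nat.le_induction with
      | base => exact hbase
      | succ m hm ih => exact hankel_step s hpsd m ih
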